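/- Let λ ∈ ℂ with Re λ ≥ 1/2 and let v ∈ C^∞[0,1] solve the dual eigenvalue equation −(1−ρ²)v''(ρ) − (2(1−ρ²)/ρ)v'(ρ) + 2λρv'(ρ) + (Ṽ(ρ)/ρ²)v(ρ) + λ(λ+1)v(ρ) = 0 on (0,1), where Ṽ(ρ) = (6−2ρ²)/(1+ρ²). If v(1) = 0 then v vanishes identically on [0,1]. -/

import Mathlib

/-- The dual potential `Ṽ(ρ) = (6−2ρ²)/(1+ρ²)`. -/
noncomputable def Vdual (ρ : ℝ) : ℝ := (6 - 2 * ρ ^ 2) / (1 + ρ ^ 2)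


open Set intervalIntegral MeasureTheory

lemma pow_int : ∀ (ρ b : ℝ) (n : ℕ), ρ ≤ b →
    ∫ s in ρ..b, (b - s)^n = (b-ρ)^(n+1) / (n+1) := by
  intro ρ b n _
  rw [show (fun s => (b-s)^n) = (fun s => (fun x => x^n) (b - s)) from rfl,
    intervalIntegral.integral_comp_sub_left (fun x => x^n) b]
  simp [integral_pow]

lemma bnd {a b M : ℝ} {n : ℕ} {φ φ' : ℝ → ℂ} (hab : a ≤ b) (hM : 0 ≤ M)
    (hd : ∀ ρ ∈ Set.Icc a b, HasDerivWithinAt φ (φ' ρ) (Set.Icc a b) ρ)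
    (hc : ContinuousOn φ' (Set.Icc a b)) (hb0 : φ b = 0)
    (hbd : ∀ s ∈ Set.Ico a b, ‖φ' s‖ ≤ M * (b-s)^n) :
    ∀ ρ ∈ Set.Icc a b, ‖φ ρ‖ ≤ M * (b-ρ)^(n+1) / (n+1) := by
  intro ρ hρ
  have hρb : ρ ≤ b := hρ.2
  have hsub : Set.Icc ρ b ⊆ Set.Icc a b := Set.Icc_subset_Icc hρ.1 le_rfl
  have hφcont : ContinuousOn φ (Set.Icc a b) := fun x hx =>
    ((hd x hx).differentiableWithinAt).continuousWithinAt
  have hci : IntervalIntegrable φ' MeasureTheory.volume ρ b := by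
    apply ContinuousOn.intervalIntegrable
    rw [Set.uIcc_of_le hρb]; exact hc.mono hsub
  have hftc : ∫ s in ρ..b, φ' s = φ b - φ ρ := by
    apply intervalIntegral.integral_eq_sub_of_hasDeriv_right_of_le hρb
      (hφcont.mono hsub) _ hci
    · intro x hx
      have hx' : x ∈ Set.Icc a b := hsub ⟨le_of_lt hx.1, le_of_lt hx.2⟩
      apply (hd x hx').mono_of_mem_nhdsWithin
      have : Set.Ioo ρ b ∈ nhds x := Ioo_mem_nhds hx.1 hx.2
      exact Filter.mem_of_superset (nhdsWithin_le_nhds this) (fun y hy => hsub (Set.Ioo_subset_Icc_self hy))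
  have h1 : ‖φ ρ‖ = ‖∫ s in ρ..b, φ' s‖ := by rw [hftc, hb0, zero_sub, norm_neg]
  rw [h1]
  have h2 : ‖∫ s in ρ..b, φ' s‖ ≤ ∫ s in ρ..b, ‖φ' s‖ :=
    intervalIntegral.norm_integral_le_integral_norm hρb
  have h3 : ∫ s in ρ..b, ‖φ' s‖ ≤ ∫ s in ρ..b, M * (b-s)^n := by
    apply intervalIntegral.integral_mono_ae_restrict hρb
    · exact ContinuousOn.intervalIntegrable (by rw [Set.uIcc_of_le hρb]; exact (hc.mono hsub).norm)
    · exact (Continuous.intervalIntegrable (by continuity) _ _)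
    · have hnull : (MeasureTheory.volume.restrict (Set.Icc ρ b)) {b} = 0 := by
        exact le_antisymm (le_trans (MeasureTheory.Measure.restrict_le_self _) (by simp)) zero_le
      have hne : ∀ᵐ s ∂(MeasureTheory.volume.restrict (Set.Icc ρ b)), s ≠ b := by
        rw [MeasureTheory.ae_iff]
        simp only [ne_eq, not_not]
        simpa using hnull
      have hmem : ∀ᵐ s ∂(MeasureTheory.volume.restrict (Set.Icc ρ b)), s ∈ Set.Icc ρ b :=
        MeasureTheory.ae_restrict_mem measurableSet_Icc
      filter_upwards [hne, hmem] with s hs1 hs2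
      exact hbd s ⟨le_trans hρ.1 hs2.1, lt_of_le_of_ne hs2.2 hs1⟩
  have h4 : ∫ s in ρ..b, M * (b-s)^n = M * ((b-ρ)^(n+1) / (n+1)) := by
    rw [intervalIntegral.integral_const_mul, pow_int ρ b n hρb]
  calc ‖∫ s in ρ..b, φ' s‖ ≤ ∫ s in ρ..b, M * (b-s)^n := le_trans h2 h3
    _ = M * (b-ρ)^(n+1) / (n+1) := by rw [h4]; ring
lemma key {a b K E0 : ℝ} {n : ℕ} {f g h : ℝ → ℂ} (hab : a < b) (hba : b - a ≤ 1)
    (hK0 : 0 ≤ K) (hE0 : 0 ≤ E0) (hn : 2*K ≤ n)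
    (hf : ∀ ρ ∈ Set.Icc a b, HasDerivWithinAt f (g ρ) (Set.Icc a b) ρ)
    (hg : ∀ ρ ∈ Set.Icc a b, HasDerivWithinAt g (h ρ) (Set.Icc a b) ρ)
    (hh : ContinuousOn h (Set.Icc a b))
    (hfb : f b = 0) (hgb : g b = 0)
    (hKb : ∀ ρ ∈ Set.Ico a b, (b - ρ) * ‖h ρ‖ ≤ K * (‖f ρ‖ + ‖g ρ‖))
    (hgE : ∀ ρ ∈ Set.Icc a b, ‖g ρ‖ ≤ E0 * (b-ρ)^(n+1))
    (hfE : ∀ ρ ∈ Set.Icc a b, ‖f ρ‖ ≤ E0 * (b-ρ)^(n+2) / (n+2)) :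
    ∀ ρ ∈ Set.Icc a b, f ρ = 0 ∧ g ρ = 0 := by
  set r : ℝ := 2*K/(n+1) with hr
  have hnpos : (0:ℝ) < n + 1 := by positivity
  have hr0 : 0 ≤ r := by positivity
  have hr1 : r < 1 := by
    rw [hr, div_lt_one hnpos]
    linarith [hn]
  -- iteration
  have iter : ∀ m : ℕ, ∀ ρ ∈ Set.Icc a b,
      ‖g ρ‖ ≤ E0 * r^m * (b-ρ)^(n+1) ∧ ‖f ρ‖ ≤ E0 * r^m * (b-ρ)^(n+2) / (n+2) := by
    intro m
    induction m with
    | zero => intro ρ hρ; simpa using ⟨hgE ρ hρ, hfE ρ hρ⟩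
    | succ m ih =>
      set E : ℝ := E0 * r^m with hE
      have hEpos : 0 ≤ E := by positivity
      -- bound on h
      have hhb : ∀ s ∈ Set.Ico a b, ‖h s‖ ≤ (2*K*E) * (b-s)^n := by
        intro s hs
        have hbs : 0 < b - s := by linarith [hs.2]
        have hbs1 : b - s ≤ 1 := by linarith [hs.1]
        have h1 := hKb s hs
        have h2 := (ih s ⟨hs.1, le_of_lt hs.2⟩).1
        have h3 := (ih s ⟨hs.1, le_of_lt hs.2⟩).2
        -- ‖f‖ ≤ E (b-s)^{n+2}/(n+2) ≤ E (b-s)^{n+1}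
        have h4 : ‖f s‖ ≤ E * (b-s)^(n+1) := by
          have : E * (b-s)^(n+2) / (n+2) ≤ E * (b-s)^(n+1) := by
            rw [div_le_iff₀ (by positivity)]
            have : E * (b-s)^(n+2) ≤ E * (b-s)^(n+1) := by
              apply mul_le_mul_of_nonneg_left _ hEpos
              calc (b-s)^(n+2) = (b-s)^(n+1) * (b-s) := by ring
                _ ≤ (b-s)^(n+1) * 1 := by
                    apply mul_le_mul_of_nonneg_left hbs1 (by positivity)
                _ = (b-s)^(n+1) := by ring
            calc E * (b-s)^(n+2) ≤ E * (b-s)^(n+1) := this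
              _ ≤ E * (b-s)^(n+1) * (n+2) := by nlinarith [mul_nonneg hEpos (pow_nonneg (le_of_lt hbs) (n+1))]
          linarith [h3]
        have h5 : (b-s) * ‖h s‖ ≤ K * (E * (b-s)^(n+1) + E * (b-s)^(n+1)) := by
          calc (b-s) * ‖h s‖ ≤ K * (‖f s‖ + ‖g s‖) := h1
            _ ≤ K * (E * (b-s)^(n+1) + E * (b-s)^(n+1)) := by
                apply mul_le_mul_of_nonneg_left _ hK0
                exact add_le_add h4 h2
        have h6 : (b-s) * ‖h s‖ ≤ (2*K*E) * (b-s)^n * (b-s) := by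
          calc (b-s) * ‖h s‖ ≤ K * (E * (b-s)^(n+1) + E * (b-s)^(n+1)) := h5
            _ = (2*K*E) * (b-s)^n * (b-s) := by ring
        have := (mul_le_mul_iff_of_pos_right hbs).mp (by linarith [h6] : ‖h s‖ * (b-s) ≤ ((2*K*E) * (b-s)^n) * (b-s))
        exact this
      -- integrate to bound g
      have hgb' : ∀ ρ ∈ Set.Icc a b, ‖g ρ‖ ≤ (2*K*E) * (b-ρ)^(n+1) / (n+1) :=
        bnd (le_of_lt hab) (by positivity) hg hh hgb hhb
      have hgnew : ∀ ρ ∈ Set.Icc a b, ‖g ρ‖ ≤ (E0 * r^(m+1)) * (b-ρ)^(n+1) := by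
        intro ρ hρ
        have := hgb' ρ hρ
        have heq : (2*K*E) / (n+1) = E0 * r^(m+1) := by
          rw [hE, hr]; field_simp; rw [pow_succ]; field_simp
        calc ‖g ρ‖ ≤ (2*K*E) * (b-ρ)^(n+1) / (n+1) := this
          _ = ((2*K*E)/(n+1)) * (b-ρ)^(n+1) := by ring
          _ = (E0 * r^(m+1)) * (b-ρ)^(n+1) := by rw [heq]
      -- integrate to bound f
      have hgcont : ContinuousOn g (Set.Icc a b) := fun x hx =>
        ((hg x hx).differentiableWithinAt).continuousWithinAt
      have hfnew := bnd (le_of_lt hab) (by positivity : (0:ℝ) ≤ E0 * r^(m+1)) hf hgcont hfb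
        (fun s hs => hgnew s ⟨hs.1, le_of_lt hs.2⟩)
      intro ρ hρ
      refine ⟨hgnew ρ hρ, ?_⟩
      have := hfnew ρ hρ
      have he : ((n:ℝ)+1)+1 = (n:ℝ)+2 := by ring
      rw [show (n+1)+1 = n+2 from rfl] at this
      push_cast at this ⊢
      rw [show ((n:ℝ)+1+1)=((n:ℝ)+2) by ring] at this
      exact this
  -- take limits
  intro ρ hρ
  have hlim : Filter.Tendsto (fun m : ℕ => E0 * r^m * (b-ρ)^(n+1)) Filter.atTop (nhds 0) := by
    have := tendsto_pow_atTop_nhds_zero_of_lt_one hr0 hr1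
    have := (this.const_mul E0).mul_const ((b-ρ)^(n+1))
    simpa using this
  have hlim2 : Filter.Tendsto (fun m : ℕ => E0 * r^m * (b-ρ)^(n+2) / (n+2)) Filter.atTop (nhds 0) := by
    have := tendsto_pow_atTop_nhds_zero_of_lt_one hr0 hr1
    have := ((this.const_mul E0).mul_const ((b-ρ)^(n+2))).div_const ((n:ℝ)+2)
    simpa using this
  constructor
  · rw [← norm_eq_zero]
    have h1 : ‖f ρ‖ ≤ 0 := le_of_tendsto_of_tendsto' tendsto_const_nhds hlim2
      (fun m => (iter m ρ hρ).2)
    exact le_antisymm h1 (norm_nonneg _)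
  · rw [← norm_eq_zero]
    have h1 : ‖g ρ‖ ≤ 0 := le_of_tendsto_of_tendsto' tendsto_const_nhds hlim
      (fun m => (iter m ρ hρ).1)
    exact le_antisymm h1 (norm_nonneg _)
lemma zero_on_Icc {F : ℝ → ℂ} (hc : ContinuousOn F (Set.Icc 0 1))
    (h0 : ∀ x ∈ Set.Ioo (0:ℝ) 1, F x = 0) : ∀ x ∈ Set.Icc (0:ℝ) 1, F x = 0 := by
  intro x hx
  by_cases hx' : x ∈ Set.Ioo (0:ℝ) 1
  · exact h0 x hx'
  · have hcl : x ∈ closure (Set.Ioo (0:ℝ) 1) := by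
      rw [closure_Ioo (by norm_num : (0:ℝ) ≠ 1)]; exact hx
    have hnb : (nhdsWithin x (Set.Ioo (0:ℝ) 1)).NeBot :=
      mem_closure_iff_nhdsWithin_neBot.mp hcl
    have t1 : Filter.Tendsto F (nhdsWithin x (Set.Ioo (0:ℝ) 1)) (nhds (F x)) :=
      (hc x hx).mono_left (nhdsWithin_mono x Set.Ioo_subset_Icc_self)
    have t2 : Filter.Tendsto F (nhdsWithin x (Set.Ioo (0:ℝ) 1)) (nhds 0) := by
      apply Filter.Tendsto.congr' _ tendsto_const_nhds
      filter_upwards [self_mem_nhdsWithin] with y hy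
      exact (h0 y hy).symm
    exact tendsto_nhds_unique t1 t2

noncomputable def Pc : ℝ → ℂ := fun x => (x:ℂ)^6 - (x:ℂ)^2
noncomputable def DPc : ℝ → ℂ := fun x => 6*(x:ℂ)^5 - 2*(x:ℂ)
noncomputable def Qc (l : ℂ) : ℝ → ℂ :=
  fun x => 2*l*(x:ℂ)^3 + 2*l*(x:ℂ)^5 + 2*(x:ℂ)^5 - 2*(x:ℂ)
noncomputable def Rc (l : ℂ) : ℝ → ℂ :=
  fun x => 6 - 2*(x:ℂ)^2 + l*(l+1)*((x:ℂ)^2 + (x:ℂ)^4)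

lemma contDiff_ofReal : ContDiff ℝ (⊤:ℕ∞) (fun y : ℝ => (y:ℂ)) :=
  Complex.ofRealCLM.contDiff

lemma Pc_smooth : ContDiff ℝ (⊤:ℕ∞) Pc := ((contDiff_ofReal.pow 6).sub (contDiff_ofReal.pow 2))
lemma DPc_smooth : ContDiff ℝ (⊤:ℕ∞) DPc :=
  ((contDiff_const.mul (contDiff_ofReal.pow 5)).sub (contDiff_const.mul contDiff_ofReal))
lemma Qc_smooth (l : ℂ) : ContDiff ℝ (⊤:ℕ∞) (Qc l) := by
  unfold Qc
  exact (((contDiff_const.mul (contDiff_ofReal.pow 3)).add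
    (contDiff_const.mul (contDiff_ofReal.pow 5))).add
    (contDiff_const.mul (contDiff_ofReal.pow 5))).sub (contDiff_const.mul contDiff_ofReal)
lemma Rc_smooth (l : ℂ) : ContDiff ℝ (⊤:ℕ∞) (Rc l) := by
  unfold Rc
  exact (contDiff_const.sub (contDiff_const.mul (contDiff_ofReal.pow 2))).add
    (contDiff_const.mul ((contDiff_ofReal.pow 2).add (contDiff_ofReal.pow 4)))

lemma hasDerivAt_ofReal (x : ℝ) : HasDerivAt (fun y : ℝ => (y:ℂ)) 1 x :=
  (hasDerivAt_id ((x:ℂ))).comp_ofReal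

lemma hasDerivAt_ofReal_pow (n : ℕ) (x : ℝ) :
    HasDerivAt (fun y : ℝ => ((y:ℂ))^n) (n*(x:ℂ)^(n-1)) x :=
  (hasDerivAt_pow n ((x:ℂ))).comp_ofReal

lemma Pc_hasDeriv (x : ℝ) : HasDerivAt Pc (DPc x) x := by
  have h := (hasDerivAt_ofReal_pow 6 x).sub (hasDerivAt_ofReal_pow 2 x)
  have he : ((6:ℕ):ℂ) * (x:ℂ)^(6-1) - ((2:ℕ):ℂ) * (x:ℂ)^(2-1) = DPc x := by
    norm_num [DPc]
  rw [he] at h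
  exact h

lemma Pc_one : Pc 1 = 0 := by simp [Pc]
lemma DPc_one : DPc 1 = 4 := by norm_num [DPc]
lemma Qc_one (l : ℂ) : Qc l 1 = 4*l := by simp [Qc]; ring

-- iterated derivatives
noncomputable def wIt (v : ℝ → ℂ) : ℕ → ℝ → ℂ := fun k => iteratedDerivWithin k v (Set.Icc 0 1)

lemma hUD : UniqueDiffOn ℝ (Set.Icc (0:ℝ) 1) := uniqueDiffOn_Icc (by norm_num)

lemma wIt_zero (v : ℝ → ℂ) : wIt v 0 = v := by
  ext x; simp [wIt]

lemma wIt_succ (v : ℝ → ℂ) (k : ℕ) {x : ℝ} (hx : x ∈ Set.Icc (0:ℝ) 1) :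
    wIt v (k+1) x = derivWithin (wIt v k) (Set.Icc 0 1) x :=
  congrFun iteratedDerivWithin_succ x

lemma wIt_smooth {v : ℝ → ℂ} (hv : ContDiffOn ℝ (⊤:ℕ∞) v (Set.Icc 0 1)) (k : ℕ) :
    ContDiffOn ℝ (⊤:ℕ∞) (wIt v k) (Set.Icc 0 1) := by
  induction k with
  | zero => rw [wIt_zero]; exact hv
  | succ k ih =>
    exact ((ih.derivWithin hUD (by simp)).congr (fun x hx => wIt_succ v k hx))

lemma wIt_deriv {v : ℝ → ℂ} (hv : ContDiffOn ℝ (⊤:ℕ∞) v (Set.Icc 0 1)) (k : ℕ)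
    {x : ℝ} (hx : x ∈ Set.Icc (0:ℝ) 1) :
    HasDerivWithinAt (wIt v k) (wIt v (k+1) x) (Set.Icc 0 1) x := by
  have h := ((wIt_smooth hv k).differentiableOn (by simp) x hx).hasDerivWithinAt
  rwa [← wIt_succ v k hx] at h
lemma stepA (l : ℂ) (v : ℝ → ℂ) (hv : ContDiffOn ℝ (⊤:ℕ∞) v (Set.Icc 0 1))
    (hbase : ∀ x ∈ Set.Icc (0:ℝ) 1,
      Pc x * wIt v 2 x + Qc l x * wIt v 1 x + Rc l x * wIt v 0 x = 0) :
    ∀ k : ℕ, ∃ (B : ℝ → ℂ) (c : ℕ → ℝ → ℂ),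
      ContDiffOn ℝ (⊤:ℕ∞) B (Set.Icc 0 1) ∧ (∀ j, ContDiffOn ℝ (⊤:ℕ∞) (c j) (Set.Icc 0 1)) ∧
      (∀ j, k < j → ∀ x ∈ Set.Icc (0:ℝ) 1, c j x = 0) ∧ B 1 = 4*k + 4*l ∧
      (∀ x ∈ Set.Icc (0:ℝ) 1, Pc x * wIt v (k+2) x + B x * wIt v (k+1) x
        + (∑ j ∈ Finset.range (k+1), c j x * wIt v j x) = 0) := by
  intro k
  induction k with
  | zero =>
    refine ⟨Qc l, fun j => if j = 0 then Rc l else (fun _ => 0), (Qc_smooth l).contDiffOn,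
      ?_, ?_, by rw [Qc_one]; push_cast; ring, ?_⟩
    · intro j
      by_cases hj : j = 0
      · simp only [hj, if_pos rfl]; exact (Rc_smooth l).contDiffOn
      · simp only [if_neg hj]; exact contDiffOn_const
    · intro j hj
      intro x hx
      simp only [if_neg (Nat.pos_iff_ne_zero.mp hj)]
    · intro x hx
      have := hbase x hx
      simpa [Finset.sum_range_one] using this
  | succ k ih =>
    obtain ⟨B, c, hB, hc, hcz, hB1, hid⟩ := ih
    set S := Set.Icc (0:ℝ) 1
    set DB : ℝ → ℂ := derivWithin B S with hDBdef
    set Dc : ℕ → ℝ → ℂ := fun j => derivWithin (c j) S with hDcdef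
    refine ⟨fun x => DPc x + B x,
      fun j x => Dc j x + (if j = k+1 then DB x else 0) + (if j = 0 then 0 else c (j-1) x),
      ?_, ?_, ?_, ?_, ?_⟩
    · exact (DPc_smooth.contDiffOn).add hB
    · intro j
      apply ContDiffOn.add
      apply ContDiffOn.add
      · exact (hc j).derivWithin hUD (by simp)
      · by_cases hj : j = k+1
        · simp only [hj, if_pos rfl]; exact hB.derivWithin hUD (by simp)
        · simp only [if_neg hj]; exact contDiffOn_const
      · by_cases hj : j = 0
        · simp only [hj, if_pos rfl]; exact contDiffOn_const
        · simp only [if_neg hj]; exact hc (j-1)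
    · intro j hj x hx
      have h3 : Dc j x = 0 := by
        rw [hDcdef]
        show derivWithin (c j) S x = 0
        have : derivWithin (c j) S x = derivWithin (fun _ => (0:ℂ)) S x :=
          derivWithin_congr (fun y hy => hcz j (by omega) y hy) (hcz j (by omega) x hx)
        rw [this]
        exact congrFun (derivWithin_const _ _) x
      have h2 : c (j-1) x = 0 := hcz (j-1) (by omega) x hx
      simp [if_neg (by omega : ¬ j = k+1), if_neg (by omega : ¬ j = 0), h3, h2]
    · show DPc 1 + B 1 = _
      rw [DPc_one, hB1]; push_cast; ring
    · intro x hx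
      -- the function Φ vanishes on S
      have hΦ0 : Set.EqOn (fun y => Pc y * wIt v (k+2) y + B y * wIt v (k+1) y
          + (∑ j ∈ Finset.range (k+1), c j y * wIt v j y)) (fun _ => (0:ℂ)) S := fun y hy => hid y hy
      -- derivative of Φ within S at x
      have hder : HasDerivWithinAt (fun y => Pc y * wIt v (k+2) y + B y * wIt v (k+1) y
          + (∑ j ∈ Finset.range (k+1), c j y * wIt v j y))
          ((DPc x * wIt v (k+2) x + Pc x * wIt v (k+3) x)
            + (DB x * wIt v (k+1) x + B x * wIt v (k+2) x)
            + (∑ j ∈ Finset.range (k+1), (Dc j x * wIt v j x + c j x * wIt v (j+1) x))) S x := by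
        apply HasDerivWithinAt.add
        apply HasDerivWithinAt.add
        · exact (Pc_hasDeriv x).hasDerivWithinAt.mul (wIt_deriv hv (k+2) hx)
        · exact ((hB.differentiableOn (by simp) x hx).hasDerivWithinAt).mul
            (wIt_deriv hv (k+1) hx)
        · exact HasDerivWithinAt.fun_sum (fun j _ =>
            (((hc j).differentiableOn (by simp) x hx).hasDerivWithinAt).mul
              (wIt_deriv hv j hx))
      have hD0 : (DPc x * wIt v (k+2) x + Pc x * wIt v (k+3) x)
            + (DB x * wIt v (k+1) x + B x * wIt v (k+2) x)
            + (∑ j ∈ Finset.range (k+1), (Dc j x * wIt v j x + c j x * wIt v (j+1) x)) = 0 := by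
        have h6 : derivWithin (fun y => Pc y * wIt v (k+2) y + B y * wIt v (k+1) y
            + (∑ j ∈ Finset.range (k+1), c j y * wIt v j y)) S x = 0 := by
          rw [derivWithin_congr hΦ0 (hid x hx)]
          exact congrFun (derivWithin_const _ _) x
        exact ((hder.derivWithin (hUD x hx)).symm.trans h6)
      -- sum rearrangement
      have hsum : (∑ j ∈ Finset.range (k+2),
            (Dc j x + (if j = k+1 then DB x else 0) + (if j = 0 then 0 else c (j-1) x)) * wIt v j x)
          = DB x * wIt v (k+1) x
            + ((∑ j ∈ Finset.range (k+1), Dc j x * wIt v j x)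
            + (∑ j ∈ Finset.range (k+1), c j x * wIt v (j+1) x)) := by
        have e1 : ∀ j ∈ Finset.range (k+2),
            (Dc j x + (if j = k+1 then DB x else 0) + (if j = 0 then 0 else c (j-1) x)) * wIt v j x
            = Dc j x * wIt v j x + (if j = k+1 then DB x * wIt v j x else 0)
              + (if j = 0 then 0 else c (j-1) x * wIt v j x) := by
          intro j _
          split_ifs with h1 h2 <;> ring
        rw [Finset.sum_congr rfl e1]
        rw [Finset.sum_add_distrib, Finset.sum_add_distrib]
        have eA : (∑ j ∈ Finset.range (k+2), Dc j x * wIt v j x)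
            = ∑ j ∈ Finset.range (k+1), Dc j x * wIt v j x := by
          rw [Finset.sum_range_succ]
          have : Dc (k+1) x = 0 := by
            rw [hDcdef]
            show derivWithin (c (k+1)) S x = 0
            have h9 : derivWithin (c (k+1)) S x = derivWithin (fun _ => (0:ℂ)) S x :=
              derivWithin_congr (fun y hy => hcz (k+1) (lt_add_one k) y hy)
                (hcz (k+1) (lt_add_one k) x hx)
            rw [h9]
            exact congrFun (derivWithin_const _ _) x
          simp [this]
        have eB : (∑ j ∈ Finset.range (k+2), (if j = k+1 then DB x * wIt v j x else 0))
            = DB x * wIt v (k+1) x := by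
          rw [Finset.sum_ite_eq']
          simp [Finset.self_mem_range_succ]
        have eC : (∑ j ∈ Finset.range (k+2), (if j = 0 then 0 else c (j-1) x * wIt v j x))
            = ∑ j ∈ Finset.range (k+1), c j x * wIt v (j+1) x := by
          rw [Finset.sum_range_succ']
          simp
        rw [eA, eB, eC]; ring
      rw [hsum]
      rw [Finset.sum_add_distrib] at hD0
      linear_combination hD0
lemma wIt_one_zero (l : ℂ) (hl : (1:ℝ)/2 ≤ l.re) (v : ℝ → ℂ)
    (hv : ContDiffOn ℝ (⊤:ℕ∞) v (Set.Icc 0 1))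
    (hbase : ∀ x ∈ Set.Icc (0:ℝ) 1,
      Pc x * wIt v 2 x + Qc l x * wIt v 1 x + Rc l x * wIt v 0 x = 0)
    (hb : v 1 = 0) : ∀ k : ℕ, wIt v k 1 = 0 := by
  have h1S : (1:ℝ) ∈ Set.Icc (0:ℝ) 1 := by norm_num
  have main : ∀ k : ℕ, ∀ j ≤ k, wIt v j 1 = 0 := by
    intro k
    induction k with
    | zero =>
      intro j hj
      interval_cases j
      rw [wIt_zero]; exact hb
    | succ k ih =>
      intro j hj
      rcases Nat.lt_or_ge j (k+1) with h | h
      · exact ih j (by omega)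
      · have hj' : j = k+1 := by omega
        subst hj'
        obtain ⟨B, c, _, _, _, hB1, hid⟩ := stepA l v hv hbase k
        have hI := hid 1 h1S
        rw [Pc_one] at hI
        have hsum : (∑ j ∈ Finset.range (k+1), c j 1 * wIt v j 1) = 0 := by
          apply Finset.sum_eq_zero
          intro j hjr
          rw [ih j (Nat.lt_succ_iff.mp (Finset.mem_range.mp hjr))]
          ring
        rw [hsum] at hI
        simp only [zero_mul, zero_add, add_zero] at hI
        have hBne : B 1 ≠ 0 := by
          rw [hB1]
          intro hcon
          have := congrArg Complex.re hcon
          simp [Complex.add_re, Complex.mul_re] at this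
          have hk : (0:ℝ) ≤ (k:ℝ) := Nat.cast_nonneg k
          nlinarith [this]
        exact (mul_eq_zero.mp hI).resolve_left hBne
  exact fun k => main k k le_rfl

lemma taylor_flat {v : ℝ → ℂ} (hv : ContDiffOn ℝ (⊤:ℕ∞) v (Set.Icc 0 1))
    {aa bb : ℝ} (haa : aa < bb) (hsub : Set.Icc aa bb ⊆ Set.Icc 0 1)
    (hzb : ∀ j, wIt v j bb = 0) (N : ℕ) :
    ∃ M : ℝ, 0 ≤ M ∧ (∀ ρ ∈ Set.Icc aa bb, ‖wIt v 1 ρ‖ ≤ M * (bb-ρ)^(N+1)) ∧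
      (∀ ρ ∈ Set.Icc aa bb, ‖v ρ‖ ≤ M * (bb-ρ)^(N+2)/(N+2)) := by
  obtain ⟨C, hC⟩ := (isCompact_Icc (a := aa) (b := bb)).exists_bound_of_continuousOn
    ((wIt_smooth hv (N+2)).continuousOn.mono hsub)
  set M := max C 0 with hM
  have hM0 : 0 ≤ M := le_max_right _ _
  have claim : ∀ i m : ℕ, m + i = N+2 → ∀ ρ ∈ Set.Icc aa bb,
      ‖wIt v m ρ‖ ≤ M * (bb-ρ)^i / (i.factorial : ℝ) := by
    intro i
    induction i with
    | zero =>
      intro m hm ρ hρ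
      have : m = N+2 := by omega
      subst this
      have h8 : ‖wIt v (N+2) ρ‖ ≤ M := le_trans (hC ρ hρ) (le_max_left C 0)
      simpa using h8
    | succ i ih =>
      intro m hm ρ hρ
      have hstep := bnd (n := i) (le_of_lt haa) (by positivity : (0:ℝ) ≤ M / (i.factorial : ℝ))
        (fun x hx => (wIt_deriv hv m (hsub hx)).mono hsub)
        (((wIt_smooth hv (m+1)).continuousOn).mono hsub) (hzb m) ?_ ρ hρ
      · have hfac : (((i+1).factorial : ℝ)) = ((i.factorial : ℝ)) * ((i:ℝ)+1) := by
          rw [Nat.factorial_succ]; push_cast; ring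
        have heq : M / (i.factorial : ℝ) * (bb-ρ)^(i+1) / ((i:ℝ)+1)
            = M * (bb-ρ)^(i+1) / ((i+1).factorial : ℝ) := by
          rw [hfac, div_mul_eq_mul_div, div_div]
        rw [heq] at hstep
        exact hstep
      · intro s hs
        have h2 := ih (m+1) (by omega) s ⟨hs.1, le_of_lt hs.2⟩
        calc ‖wIt v (m+1) s‖ ≤ M * (bb-s)^i / (i.factorial : ℝ) := h2
          _ = M / (i.factorial : ℝ) * (bb-s)^i := by ring
  refine ⟨M, hM0, ?_, ?_⟩
  · intro ρ hρ
    have h1 := claim (N+1) 1 (by omega) ρ hρ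
    calc ‖wIt v 1 ρ‖ ≤ M * (bb-ρ)^(N+1) / ((N+1).factorial : ℝ) := h1
      _ ≤ M * (bb-ρ)^(N+1) := by
          apply div_le_self (mul_nonneg hM0 (pow_nonneg (sub_nonneg.mpr hρ.2) _))
          exact_mod_cast Nat.one_le_iff_ne_zero.mpr (Nat.factorial_ne_zero (N+1))
  · intro ρ hρ
    have h1 := claim (N+2) 0 (by omega) ρ hρ
    rw [wIt_zero] at h1
    calc ‖v ρ‖ ≤ M * (bb-ρ)^(N+2) / ((N+2).factorial : ℝ) := h1
      _ ≤ M * (bb-ρ)^(N+2) / ((N:ℝ)+2) := by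
          apply div_le_div_of_nonneg_left (mul_nonneg hM0 (pow_nonneg (sub_nonneg.mpr hρ.2) _)) (by positivity)
          exact_mod_cast Nat.self_le_factorial (N+2)

set_option maxHeartbeats 1000000 in
/-- if `Re λ ≥ 1/2` and `v ∈ C^∞[0,1]` solves the dual eigenvalue equation
with potential `Ṽ` on `(0,1)` and `v(1) = 0`, then `v` vanishes identically on `[0,1]`. -/
theorem stmt_13 (lam : ℂ) (hlam : (1:ℝ)/2 ≤ lam.re) (v : ℝ → ℂ)
    (hv : ContDiffOn ℝ (⊤ : ℕ∞) v (Set.Icc 0 1))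
    (hode : ∀ ρ ∈ Set.Ioo (0:ℝ) 1,
      -(1 - (ρ:ℂ) ^ 2) * deriv (deriv v) ρ
      - (2 * (1 - (ρ:ℂ) ^ 2) / (ρ:ℂ)) * deriv v ρ
      + 2 * lam * (ρ:ℂ) * deriv v ρ
      + (((Vdual ρ : ℝ) : ℂ) / (ρ:ℂ) ^ 2) * v ρ
      + lam * (lam + 1) * v ρ = 0)
    (hb : v 1 = 0) :
    ∀ ρ ∈ Set.Icc (0:ℝ) 1, v ρ = 0 := by
  have hmemS : ∀ {ρ : ℝ}, ρ ∈ Set.Ioo (0:ℝ) 1 → ρ ∈ Set.Icc (0:ℝ) 1 :=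
    fun hρ => Set.Ioo_subset_Icc_self hρ
  have hnb : ∀ {ρ : ℝ}, ρ ∈ Set.Ioo (0:ℝ) 1 → Set.Icc (0:ℝ) 1 ∈ nhds ρ :=
    fun hρ => Icc_mem_nhds hρ.1 hρ.2
  -- identify deriv with within-derivatives on the interior
  have hd1 : ∀ ρ ∈ Set.Ioo (0:ℝ) 1, deriv v ρ = wIt v 1 ρ := by
    intro ρ hρ
    have h := wIt_succ v 0 (hmemS hρ)
    rw [wIt_zero] at h
    rw [← derivWithin_of_mem_nhds (hnb hρ)]
    exact h.symm
  have hd2 : ∀ ρ ∈ Set.Ioo (0:ℝ) 1, deriv (deriv v) ρ = wIt v 2 ρ := by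
    intro ρ hρ
    have hee : deriv v =ᶠ[nhds ρ] wIt v 1 := by
      filter_upwards [Ioo_mem_nhds hρ.1 hρ.2] with y hy using hd1 y hy
    rw [hee.deriv_eq, ← derivWithin_of_mem_nhds (hnb hρ)]
    exact (wIt_succ v 1 (hmemS hρ)).symm
  -- the polynomial form of the ODE, on all of [0,1]
  have hbase : ∀ x ∈ Set.Icc (0:ℝ) 1,
      Pc x * wIt v 2 x + Qc lam x * wIt v 1 x + Rc lam x * wIt v 0 x = 0 := by
    apply zero_on_Icc
    · apply ContinuousOn.add
      apply ContinuousOn.add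
      · exact (Pc_smooth.continuous.continuousOn).mul ((wIt_smooth hv 2).continuousOn)
      · exact ((Qc_smooth lam).continuous.continuousOn).mul ((wIt_smooth hv 1).continuousOn)
      · exact ((Rc_smooth lam).continuous.continuousOn).mul ((wIt_smooth hv 0).continuousOn)
    · intro ρ hρ
      have h0 := hode ρ hρ
      rw [hd1 ρ hρ, hd2 ρ hρ] at h0
      have hρ0 : (ρ:ℂ) ≠ 0 := Complex.ofReal_ne_zero.mpr (ne_of_gt hρ.1)
      have hρ1 : (1:ℂ) + (ρ:ℂ)^2 ≠ 0 := by
        have h9 : ((1 + ρ^2 : ℝ):ℂ) ≠ 0 := Complex.ofReal_ne_zero.mpr (by positivity)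
        push_cast at h9
        exact h9
      have hV : ((Vdual ρ : ℝ):ℂ) = (6 - 2*(ρ:ℂ)^2)/(1+(ρ:ℂ)^2) := by
        rw [Vdual]; push_cast; ring
      rw [hV] at h0
      rw [wIt_zero]
      show Pc ρ * wIt v 2 ρ + Qc lam ρ * wIt v 1 ρ + Rc lam ρ * v ρ = 0
      field_simp at h0
      have h9 : (ρ:ℂ) * (Pc ρ * wIt v 2 ρ + Qc lam ρ * wIt v 1 ρ + Rc lam ρ * v ρ) = 0 := by
        unfold Pc Qc Rc
        linear_combination (ρ:ℂ) * h0
      exact (mul_eq_zero.mp h9).resolve_left hρ0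
  have hbase' := hbase
  rw [wIt_zero] at hbase'
  -- all iterated derivatives vanish at 1
  have hflat1 : ∀ k, wIt v k 1 = 0 := wIt_one_zero lam hlam v hv hbase hb
  -- uniform bounds on the coefficients
  obtain ⟨MQ, hMQ⟩ := (isCompact_Icc (a:=(0:ℝ)) (b:=1)).exists_bound_of_continuousOn
    ((Qc_smooth lam).continuous.continuousOn)
  obtain ⟨MR, hMR⟩ := (isCompact_Icc (a:=(0:ℝ)) (b:=1)).exists_bound_of_continuousOn
    ((Rc_smooth lam).continuous.continuousOn)
  have hMQ0 : 0 ≤ MQ := le_trans (norm_nonneg _) (hMQ 0 (by norm_num))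
  have hMR0 : 0 ≤ MR := le_trans (norm_nonneg _) (hMR 0 (by norm_num))
  -- generic product bound
  have hPabs : ∀ ρ ∈ Set.Icc (0:ℝ) 1,
      ‖Pc ρ‖ * ‖wIt v 2 ρ‖ ≤ (MQ+MR) * (‖v ρ‖ + ‖wIt v 1 ρ‖) := by
    intro ρ hρ
    have hid := hbase' ρ hρ
    have h2 : Pc ρ * wIt v 2 ρ = -(Qc lam ρ * wIt v 1 ρ + Rc lam ρ * v ρ) := by
      linear_combination hid
    calc ‖Pc ρ‖ * ‖wIt v 2 ρ‖ = ‖Pc ρ * wIt v 2 ρ‖ := (norm_mul _ _).symm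
      _ = ‖Qc lam ρ * wIt v 1 ρ + Rc lam ρ * v ρ‖ := by rw [h2, norm_neg]
      _ ≤ ‖Qc lam ρ * wIt v 1 ρ‖ + ‖Rc lam ρ * v ρ‖ := norm_add_le _ _
      _ = ‖Qc lam ρ‖ * ‖wIt v 1 ρ‖ + ‖Rc lam ρ‖ * ‖v ρ‖ := by rw [norm_mul, norm_mul]
      _ ≤ MQ * ‖wIt v 1 ρ‖ + MR * ‖v ρ‖ := by
          gcongr
          · exact hMQ ρ hρ
          · exact hMR ρ hρ
      _ ≤ (MQ+MR) * (‖v ρ‖ + ‖wIt v 1 ρ‖) := by nlinarith [mul_nonneg hMQ0 (norm_nonneg (v ρ)), mul_nonneg hMR0 (norm_nonneg (wIt v 1 ρ))]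
  -- norm of Pc as a real quantity
  have hPval : ∀ ρ : ℝ, ρ ∈ Set.Icc (0:ℝ) 1 → ‖Pc ρ‖ = ρ^2 - ρ^6 := by
    intro ρ hρ
    have h1 : Pc ρ = (((ρ^6 - ρ^2 : ℝ)):ℂ) := by unfold Pc; push_cast; ring
    rw [h1, Complex.norm_real, Real.norm_eq_abs,
      abs_of_nonpos (by
        have h4 : ρ^4 ≤ 1 := pow_le_one₀ hρ.1 hρ.2
        nlinarith [sq_nonneg ρ, h4] : ρ^6 - ρ^2 ≤ 0)]
    ring
  -- derivative facts for v and w1 usable by `key`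
  have hfd : ∀ ρ ∈ Set.Icc (0:ℝ) 1, HasDerivWithinAt v (wIt v 1 ρ) (Set.Icc (0:ℝ) 1) ρ := by
    intro ρ hρ
    have h := wIt_deriv hv 0 (x := ρ) hρ
    rw [wIt_zero] at h
    exact h
  -- region 1 : [1/2, 1]
  set K1 : ℝ := (8/3)*(MQ+MR) with hK1def
  have hK10 : 0 ≤ K1 := by positivity
  set N1 : ℕ := ⌈2*K1⌉₊ with hN1def
  obtain ⟨M1, hM10, hg1, hf1⟩ := taylor_flat hv (by norm_num : (1/2:ℝ) < 1)
    (Set.Icc_subset_Icc (by norm_num) le_rfl) hflat1 N1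
  have hsub1 : Set.Icc (1/2:ℝ) 1 ⊆ Set.Icc (0:ℝ) 1 := Set.Icc_subset_Icc (by norm_num) le_rfl
  have hreg1 : ∀ ρ ∈ Set.Icc (1/2:ℝ) 1, v ρ = 0 ∧ wIt v 1 ρ = 0 := by
    apply key (by norm_num : (1/2:ℝ) < 1) (by norm_num) hK10 hM10 (Nat.le_ceil _)
      (fun ρ hρ => (hfd ρ (hsub1 hρ)).mono hsub1)
      (fun ρ hρ => (wIt_deriv hv 1 (hsub1 hρ)).mono hsub1)
      ((wIt_smooth hv 2).continuousOn.mono hsub1)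
      hb (hflat1 1) ?_ hg1 hf1
    intro ρ hρ
    have hρS : ρ ∈ Set.Icc (0:ℝ) 1 := ⟨by linarith [hρ.1], hρ.2.le⟩
    have hlow : (3/8)*(1-ρ) ≤ ‖Pc ρ‖ := by
      rw [hPval ρ hρS]
      have h1 : (1/2:ℝ) ≤ ρ := hρ.1
      have h2 : ρ ≤ 1 := hρ.2.le
      have hkey : 0 ≤ (1-ρ) * (ρ^2*(1+ρ)*(1+ρ^2) - 3/8) := by
        apply mul_nonneg (by linarith)
        have h0ρ : (0:ℝ) ≤ ρ := by linarith
        have p2 : (1/4:ℝ) ≤ ρ^2 := by nlinarith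
        have p3 : (1/8:ℝ) ≤ ρ^3 := by nlinarith
        nlinarith [pow_nonneg h0ρ 4, pow_nonneg h0ρ 5]
      nlinarith [hkey]
    calc (1-ρ) * ‖wIt v 2 ρ‖ ≤ ((8/3) * ‖Pc ρ‖) * ‖wIt v 2 ρ‖ := by
          apply mul_le_mul_of_nonneg_right (by linarith [hlow]) (norm_nonneg _)
      _ = (8/3) * (‖Pc ρ‖ * ‖wIt v 2 ρ‖) := by ring
      _ ≤ (8/3) * ((MQ+MR) * (‖v ρ‖ + ‖wIt v 1 ρ‖)) := by
          apply mul_le_mul_of_nonneg_left (hPabs ρ hρS) (by norm_num)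
      _ = K1 * (‖v ρ‖ + ‖wIt v 1 ρ‖) := by rw [hK1def]; ring
  -- all iterated derivatives vanish on (1/2,1), in particular at 3/4
  have hmid : ∀ j, ∀ x ∈ Set.Ioo (1/2:ℝ) 1, wIt v j x = 0 := by
    intro j
    induction j with
    | zero =>
      intro x hx
      rw [wIt_zero]
      exact (hreg1 x ⟨hx.1.le, hx.2.le⟩).1
    | succ j ih =>
      intro x hx
      have hxS : x ∈ Set.Icc (0:ℝ) 1 := ⟨by linarith [hx.1], hx.2.le⟩
      rw [wIt_succ v j hxS, derivWithin_of_mem_nhds (Icc_mem_nhds (by linarith [hx.1]) hx.2)]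
      have hee : wIt v j =ᶠ[nhds x] (fun _ => (0:ℂ)) := by
        filter_upwards [Ioo_mem_nhds hx.1 hx.2] with y hy using ih y hy
      rw [hee.deriv_eq]
      exact deriv_const x 0
  have hflat34 : ∀ j, wIt v j (3/4:ℝ) = 0 :=
    fun j => hmid j (3/4) ⟨by norm_num, by norm_num⟩
  -- region 2 : [aa, 3/4] for each 0 < aa < 1/2
  have hreg2 : ∀ aa : ℝ, 0 < aa → aa < 1/2 → v aa = 0 := by
    intro aa haa0 haa12
    set K2 : ℝ := (3/(2*aa^2))*(MQ+MR) with hK2def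
    have hK20 : 0 ≤ K2 := by positivity
    set N2 : ℕ := ⌈2*K2⌉₊ with hN2def
    have hsub2 : Set.Icc aa (3/4:ℝ) ⊆ Set.Icc (0:ℝ) 1 :=
      Set.Icc_subset_Icc (by linarith) (by norm_num)
    obtain ⟨M2, hM20, hg2, hf2⟩ := taylor_flat hv (by linarith : aa < (3/4:ℝ)) hsub2 hflat34 N2
    have hres := key (by linarith : aa < (3/4:ℝ)) (by linarith) hK20 hM20 (Nat.le_ceil _)
      (fun ρ hρ => (hfd ρ (hsub2 hρ)).mono hsub2)
      (fun ρ hρ => (wIt_deriv hv 1 (hsub2 hρ)).mono hsub2)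
      ((wIt_smooth hv 2).continuousOn.mono hsub2)
      (show v (3/4:ℝ) = 0 by rw [← wIt_zero v]; exact hflat34 0) (hflat34 1) ?_ hg2 hf2
    · exact (hres aa ⟨le_rfl, by linarith⟩).1
    · intro ρ hρ
      have hρS : ρ ∈ Set.Icc (0:ℝ) 1 := hsub2 ⟨hρ.1, hρ.2.le⟩
      have hlow : aa^2/2 ≤ ‖Pc ρ‖ := by
        rw [hPval ρ hρS]
        have h1 : aa ≤ ρ := hρ.1
        have h2 : ρ ≤ 3/4 := hρ.2.le
        have h3 : aa^2 ≤ ρ^2 := by nlinarith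
        have h0ρ : (0:ℝ) ≤ ρ := le_trans haa0.le h1
        have h4' : ρ^4 ≤ (3/4:ℝ)^4 := pow_le_pow_left₀ h0ρ h2 4
        have h4 : ρ^6 ≤ (81/256) * ρ^2 := by nlinarith [h4', sq_nonneg ρ]
        nlinarith [h3, h4]
      have hP2 : (3/4 - ρ) * ‖wIt v 2 ρ‖ ≤ (3/(2*aa^2)) * (‖Pc ρ‖ * ‖wIt v 2 ρ‖) := by
        have h5 : (3/4 - ρ) ≤ (3/(2*aa^2)) * ‖Pc ρ‖ := by
          have h6 : (3/(2*aa^2)) * (aa^2/2) ≤ (3/(2*aa^2)) * ‖Pc ρ‖ :=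
            mul_le_mul_of_nonneg_left hlow (by positivity)
          have h7 : (3/(2*aa^2)) * (aa^2/2) = 3/4 := by field_simp; ring
          linarith [h6, h7, hρ.1, haa0]
        calc (3/4 - ρ) * ‖wIt v 2 ρ‖ ≤ ((3/(2*aa^2)) * ‖Pc ρ‖) * ‖wIt v 2 ρ‖ :=
              mul_le_mul_of_nonneg_right h5 (norm_nonneg _)
          _ = (3/(2*aa^2)) * (‖Pc ρ‖ * ‖wIt v 2 ρ‖) := by ring
      calc (3/4 - ρ) * ‖wIt v 2 ρ‖ ≤ (3/(2*aa^2)) * (‖Pc ρ‖ * ‖wIt v 2 ρ‖) := hP2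
        _ ≤ (3/(2*aa^2)) * ((MQ+MR) * (‖v ρ‖ + ‖wIt v 1 ρ‖)) :=
            mul_le_mul_of_nonneg_left (hPabs ρ hρS) (by positivity)
        _ = K2 * (‖v ρ‖ + ‖wIt v 1 ρ‖) := by rw [hK2def]; ring
  -- v vanishes on the open interval
  have hIoo : ∀ x ∈ Set.Ioo (0:ℝ) 1, v x = 0 := by
    intro x hx
    rcases lt_or_ge x (1/2:ℝ) with h | h
    · exact hreg2 x hx.1 h
    · exact (hreg1 x ⟨h, hx.2.le⟩).1
  exact zero_on_Icc hv.continuousOn hIoo
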